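/- Define integers v_k inductively by v_1 = 1 and v_{k+1} = k·2^{v_k} + v_k + 1, and set α = Σ_{k=1}^∞ 2^{-v_k}. Then α is irrational. -/

import Mathlib

/-- With `v 1 = 1`, `v (k+1) = k·2^(v k) + v k + 1`, the number
`α = Σ_{k=1}^∞ 2^{-v k}` is irrational. -/
theorem stmt1 (v : ℕ → ℕ) (hv1 : v 1 = 1)
    (hv : ∀ k ≥ 1, v (k + 1) = k * 2 ^ (v k) + v k + 1)
    (α : ℝ) (hα : α = ∑' k : ℕ, (2:ℝ) ^ (-(v (k + 1) : ℤ))) :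
    Irrational α := by
  have hterm : ∀ n : ℕ, (2:ℝ) ^ (-(n : ℤ)) = (1/2:ℝ) ^ n := by
    intro n
    rw [zpow_neg, zpow_natCast, one_div, inv_pow]
  set f : ℕ → ℝ := fun j => (1/2:ℝ) ^ (v (j+1)) with hf
  have hα' : α = ∑' j, f j := by
    rw [hα]; exact tsum_congr fun j => hterm _
  have half_pos : (0:ℝ) < 1/2 := by norm_num
  have half_lt_one : (1/2:ℝ) < 1 := by norm_num
  have hfpos : ∀ j, 0 < f j := fun j => pow_pos half_pos _
  have hstep : ∀ k, 1 ≤ k → v k + k ≤ v (k+1) := by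
    intro k hk
    rw [hv k hk]
    have : k ≤ k * 2 ^ (v k) := Nat.le_mul_of_pos_right k (Nat.two_pow_pos _)
    omega
  have hge : ∀ k, 1 ≤ k → k ≤ v k := by
    intro k hk
    induction k with
    | zero => omega
    | succ n ih =>
      rcases Nat.eq_or_lt_of_le hk with h | h
      · have hn0 : n = 0 := by omega
        subst hn0; rw [hv1]
      · have hn : 1 ≤ n := by omega
        have h1 := hstep n hn
        have h2 := ih hn
        omega
  have hmono : ∀ m n, 1 ≤ m → m ≤ n → v m ≤ v n := by
    intro m n hm hmn
    induction n with
    | zero => omega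
    | succ k ih =>
      rcases Nat.eq_or_lt_of_le hmn with h | h
      · rw [h]
      · have hk : m ≤ k := by omega
        have h1 : 1 ≤ k := le_trans hm hk
        have := hstep k h1
        have := ih hk
        omega
  have hsum : Summable f := by
    apply Summable.of_nonneg_of_le (fun j => (hfpos j).le) (fun j => ?_)
      (summable_geometric_of_lt_one half_pos.le half_lt_one)
    calc f j ≤ (1/2:ℝ) ^ (j+1) :=
          pow_le_pow_of_le_one half_pos.le half_lt_one.le (hge (j+1) (by omega))
      _ ≤ (1/2:ℝ) ^ j := pow_le_pow_of_le_one half_pos.le half_lt_one.le (by omega)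
  rintro ⟨r, hr⟩
  set K : ℕ := r.den with hKdef
  have hK1 : 1 ≤ K := r.pos
  set N : ℕ := v K with hN
  -- growth of v beyond K+1
  have hgrow : ∀ i, v (K+1) + i ≤ v (K+1+i) := by
    intro i
    induction i with
    | zero => simp
    | succ n ih =>
      have h1 := hstep (K+1+n) (by omega)
      have : v (K+1+n) + 1 ≤ v (K+1+n+1) := by omega
      have he : K+1+(n+1) = K+1+n+1 := by omega
      rw [he]
      omega
  -- tail bound
  set T : ℝ := ∑' i, f (i + K) with hT
  have hsplit : (∑ i ∈ Finset.range K, f i) + T = ∑' i, f i := Summable.sum_add_tsum_nat_add K hsum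
  have hTsum : Summable fun i => f (i + K) := (summable_nat_add_iff K).mpr hsum
  have hTpos : 0 < T := Summable.tsum_pos hTsum (fun i => (hfpos _).le) 0 (hfpos _)
  have hTle : T ≤ (1/2:ℝ) ^ (v (K+1)) * 2 := by
    have hmaj : ∀ i : ℕ, f (i + K) ≤ (1/2:ℝ) ^ (v (K+1)) * (1/2:ℝ) ^ i := by
      intro i
      have h1 : v (K+1) + i ≤ v (i + K + 1) := by
        have := hgrow i
        have he : K+1+i = i+K+1 := by omega
        rwa [he] at this
      calc f (i + K) = (1/2:ℝ) ^ (v (i+K+1)) := rfl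
        _ ≤ (1/2:ℝ) ^ (v (K+1) + i) :=
            pow_le_pow_of_le_one half_pos.le half_lt_one.le h1
        _ = (1/2:ℝ) ^ (v (K+1)) * (1/2:ℝ) ^ i := pow_add _ _ _
    calc T ≤ ∑' i, (1/2:ℝ) ^ (v (K+1)) * (1/2:ℝ) ^ i := by
          apply Summable.tsum_le_tsum hmaj hTsum
          exact (summable_geometric_of_lt_one half_pos.le half_lt_one).mul_left _
      _ = (1/2:ℝ) ^ (v (K+1)) * (1 - 1/2)⁻¹ := by
          rw [tsum_mul_left, tsum_geometric_of_lt_one half_pos.le half_lt_one]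
      _ = (1/2:ℝ) ^ (v (K+1)) * 2 := by norm_num
  -- partial sum times 2^N is an integer M
  have key : ∀ b : ℕ, b ≤ N → (2:ℝ)^N * (1/2:ℝ)^b = ((2:ℕ)^(N-b) : ℝ) := by
    intro b hb
    push_cast
    rw [one_div, inv_pow, ← div_eq_mul_inv, div_eq_iff (by positivity), ← pow_add,
      Nat.sub_add_cancel hb]
  set M : ℕ := ∑ j ∈ Finset.range K, 2^(N - v (j+1)) with hM
  have hPart : (2:ℝ)^N * ∑ j ∈ Finset.range K, f j = (M:ℝ) := by
    rw [Finset.mul_sum, hM]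
    push_cast
    apply Finset.sum_congr rfl
    intro j hj
    exact key _ (hmono (j+1) K (by omega) (Finset.mem_range.mp hj))
  -- q * α = num
  have hq0 : ((K:ℝ)) ≠ 0 := by positivity
  have hqα : (K:ℝ) * α = (r.num : ℝ) := by
    rw [← hr, Rat.cast_def]
    field_simp [hKdef]
    rw [hKdef]; ring
  -- the integer Z
  set Z : ℤ := r.num * 2^N - (K:ℤ) * M with hZ
  have hZreal : (Z:ℝ) = (K:ℝ) * ((2:ℝ)^N * T) := by
    have hα2 : α = (∑ j ∈ Finset.range K, f j) + T := by rw [hα', ← hsplit]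
    have : (K:ℝ) * ((2:ℝ)^N * α) = (r.num:ℝ) * 2^N := by
      rw [show (K:ℝ) * ((2:ℝ)^N * α) = ((K:ℝ) * α) * 2^N by ring, hqα]
    rw [hα2] at this
    have hexp : (K:ℝ) * ((2:ℝ)^N * ((∑ j ∈ Finset.range K, f j) + T))
        = (K:ℝ) * ((2:ℝ)^N * ∑ j ∈ Finset.range K, f j) + (K:ℝ) * ((2:ℝ)^N * T) := by
      ring
    rw [hexp, hPart] at this
    rw [hZ]
    push_cast
    linarith
  have hZpos : (0:ℝ) < (Z:ℝ) := by
    rw [hZreal]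
    positivity
  have hZlt : (Z:ℝ) < 1 := by
    rw [hZreal]
    have hvK1 : v (K+1) = K * 2^N + N + 1 := by rw [hv K hK1]
    have hb1 : (2:ℝ)^N * T ≤ (2:ℝ)^N * ((1/2:ℝ) ^ (v (K+1)) * 2) := by
      apply mul_le_mul_of_nonneg_left hTle (by positivity)
    have hb2 : (2:ℝ)^N * ((1/2:ℝ) ^ (v (K+1)) * 2) = (1/2:ℝ) ^ (K * 2^N) := by
      rw [hvK1, pow_add, pow_add, one_div, inv_pow, inv_pow]
      have h2N : ((2:ℝ)^N) ≠ 0 := by positivity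
      field_simp
    have hb3 : (1/2:ℝ) ^ (K * 2^N) ≤ (1/2:ℝ) ^ K := by
      apply pow_le_pow_of_le_one half_pos.le half_lt_one.le
      have : 1 ≤ 2^N := Nat.one_le_two_pow
      calc K = K * 1 := (mul_one K).symm
        _ ≤ K * 2^N := Nat.mul_le_mul_left K this
    have hb4 : (K:ℝ) * (1/2:ℝ) ^ K < 1 := by
      rw [one_div, inv_pow, mul_inv_lt_iff₀ (by positivity), one_mul]
      exact_mod_cast (Nat.lt_two_pow_self : K < 2^K)
    calc (K:ℝ) * ((2:ℝ)^N * T) ≤ (K:ℝ) * ((1/2:ℝ) ^ (K * 2^N)) := by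
          exact mul_le_mul_of_nonneg_left (hb1.trans_eq hb2) (by positivity)
      _ ≤ (K:ℝ) * (1/2:ℝ) ^ K := mul_le_mul_of_nonneg_left hb3 (by positivity)
      _ < 1 := hb4
  have h1 : (1:ℤ) ≤ Z := by exact_mod_cast hZpos
  have : (1:ℝ) ≤ (Z:ℝ) := by exact_mod_cast h1
  linarith
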